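/- Fix τ ∈ (0,2π), set s = sin(τ/2) (which is positive) and ω_τ = -cos(τ/2), and define ψ : ℝ → ℂ² by ψ(x) = e^(-s·|x|)·(1, -e^(iτ/2)). Then: (i) ψ is continuous on ℝ and differentiable at every x ≠ 0; (ii) ψ satisfies the dislocated Dirac eigenvalue equation at parameter τ with spectral parameter ω_τ at every x ≠ 0, i.e. i·σ₃·ψ'(x) + σ₁·ψ(x) = ω_τ·ψ(x) for x < 0 and i·σ₃·ψ'(x) + σ⋆(τ)·ψ(x) = ω_τ·ψ(x) for x > 0; (iii) ∫_ℝ (|ψ₁(x)|² + |ψ₂(x)|²) dx = 2/sin(τ/2), so ψ is a nonzero square-integrable eigenfunction and ω_τ is an eigenvalue in the spectral gap (-1,1), with ω_τ² = cos²(τ/2). -/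

import Mathlib

open Complex Matrix MeasureTheory

/-- Pauli matrix σ₁. -/
def σ1 : Matrix (Fin 2) (Fin 2) ℂ := !![0, 1; 1, 0]

/-- Pauli matrix σ₃. -/
def σ3 : Matrix (Fin 2) (Fin 2) ℂ := !![1, 0; 0, -1]

/-- σ⋆(τ) = [[0, e^(-iτ)],[e^(iτ), 0]]. -/
noncomputable def σstar (τ : ℝ) : Matrix (Fin 2) (Fin 2) ℂ :=
  !![0, Complex.exp (-(Complex.I * τ)); Complex.exp (Complex.I * τ), 0]

theorem stmt7 (τ : ℝ) (hτ : τ ∈ Set.Ioo 0 (2 * Real.pi)) :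
    let s : ℝ := Real.sin (τ / 2)
    let ωτ : ℂ := -((Real.cos (τ / 2) : ℝ) : ℂ)
    let ψ : ℝ → Fin 2 → ℂ := fun x =>
      Real.exp (-s * |x|) • ![1, -Complex.exp (Complex.I * (τ / 2))]
    0 < s ∧
    Continuous ψ ∧
    (∀ x : ℝ, x ≠ 0 → DifferentiableAt ℝ ψ x) ∧
    (∀ x : ℝ, x < 0 →
      Complex.I • σ3.mulVec (deriv ψ x) + σ1.mulVec (ψ x) = ωτ • ψ x) ∧
    (∀ x : ℝ, 0 < x →
      Complex.I • σ3.mulVec (deriv ψ x) + (σstar τ).mulVec (ψ x) = ωτ • ψ x) ∧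
    (∫ x : ℝ, (‖ψ x 0‖ ^ 2 + ‖ψ x 1‖ ^ 2))
      = 2 / Real.sin (τ / 2) ∧
    (-1 < ωτ.re ∧ ωτ.re < 1 ∧ ωτ.im = 0) ∧
    ωτ ^ 2 = ((Real.cos (τ / 2) : ℝ) : ℂ) ^ 2 := by
  obtain ⟨hτ0, hτ2⟩ := hτ
  intro s ωτ ψ
  have hsdef : s = Real.sin (τ / 2) := rfl
  have hs : 0 < s := Real.sin_pos_of_pos_of_lt_pi (by linarith) (by linarith)
  set v : Fin 2 → ℂ := ![1, -Complex.exp (Complex.I * (τ / 2))] with hv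
  have hψdef : ψ = fun x => Real.exp (-s * |x|) • v := rfl
  have hωdef : ωτ = -((Real.cos (τ / 2) : ℝ) : ℂ) := rfl
  -- derivative facts
  have hneg : ∀ x : ℝ, x < 0 → HasDerivAt ψ ((s * Real.exp (s * x)) • v) x := by
    intro x hx
    have h1 : HasDerivAt (fun y : ℝ => s * y) s x := by
      simpa using (hasDerivAt_id x).const_mul s
    have h2 := (h1.exp).smul_const v
    have heq : ψ =ᶠ[nhds x] fun y => Real.exp (s * y) • v := by
      filter_upwards [Iio_mem_nhds hx] with y hy
      simp [hψdef, abs_of_neg (Set.mem_Iio.mp hy), mul_neg, neg_neg]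
    have := h2.congr_of_eventuallyEq heq
    simpa [mul_comm] using this
  have hpos : ∀ x : ℝ, 0 < x → HasDerivAt ψ ((-s * Real.exp (-s * x)) • v) x := by
    intro x hx
    have h1 : HasDerivAt (fun y : ℝ => -s * y) (-s) x := by
      simpa using (hasDerivAt_id x).const_mul (-s)
    have h2 := (h1.exp).smul_const v
    have heq : ψ =ᶠ[nhds x] fun y => Real.exp (-s * y) • v := by
      filter_upwards [Ioi_mem_nhds hx] with y hy
      simp [hψdef, abs_of_pos (Set.mem_Ioi.mp hy)]
    have := h2.congr_of_eventuallyEq heq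
    simpa [mul_comm] using this
  -- trig facts
  have hE : Complex.exp (Complex.I * ((τ : ℂ) / 2))
      = (Real.cos (τ / 2) : ℂ) + (Real.sin (τ / 2) : ℂ) * Complex.I := by
    rw [show Complex.I * ((τ : ℂ) / 2) = ((τ / 2 : ℝ) : ℂ) * Complex.I by push_cast; ring,
      Complex.exp_mul_I, ← Complex.ofReal_cos, ← Complex.ofReal_sin]
  have hpyth : ((Real.sin (τ / 2) : ℂ)) ^ 2 + ((Real.cos (τ / 2) : ℂ)) ^ 2 = 1 := by
    exact_mod_cast congrArg (Complex.ofReal) (Real.sin_sq_add_cos_sq (τ / 2))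
  have hE2 : Complex.exp (Complex.I * (τ : ℂ))
      = Complex.exp (Complex.I * ((τ : ℂ) / 2)) ^ 2 := by
    rw [sq, ← Complex.exp_add]
    ring_nf
  have hEinv : Complex.exp (-(Complex.I * (τ : ℂ)))
      * Complex.exp (Complex.I * ((τ : ℂ) / 2)) ^ 2 = 1 := by
    rw [sq, ← Complex.exp_add, ← Complex.exp_add, show
      -(Complex.I * (τ : ℂ)) + (Complex.I * ((τ : ℂ) / 2) + Complex.I * ((τ : ℂ) / 2)) = 0 by ring,
      Complex.exp_zero]
  have hEm : Complex.exp (-(Complex.I * ((τ : ℂ) / 2)))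
      = (Real.cos (τ / 2) : ℂ) - (Real.sin (τ / 2) : ℂ) * Complex.I := by
    rw [show -(Complex.I * ((τ : ℂ) / 2)) = ((-(τ / 2) : ℝ) : ℂ) * Complex.I by push_cast; ring,
      Complex.exp_mul_I, ← Complex.ofReal_cos, ← Complex.ofReal_sin, Real.cos_neg, Real.sin_neg]
    push_cast; ring
  have hENeg : Complex.exp (-(Complex.I * (τ : ℂ)))
      = ((Real.cos (τ / 2) : ℂ) - (Real.sin (τ / 2) : ℂ) * Complex.I) ^ 2 := by
    rw [← hEm, sq, ← Complex.exp_add]; ring_nf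
  have hE2' : Complex.exp (Complex.I * (τ : ℂ))
      = ((Real.cos (τ / 2) : ℂ) + (Real.sin (τ / 2) : ℂ) * Complex.I) ^ 2 := by
    rw [hE2, hE]
  refine ⟨hs, ?_, ?_, ?_, ?_, ?_, ?_, ?_⟩
  · exact (Real.continuous_exp.comp ((continuous_const.mul _root_.continuous_abs))).smul continuous_const
  · intro x hx
    rcases hx.lt_or_gt with h | h
    · exact (hneg x h).differentiableAt
    · exact (hpos x h).differentiableAt
  · intro x hx
    rw [(hneg x hx).deriv]
    have hψx : ψ x = Real.exp (s * x) • v := by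
      simp [hψdef, abs_of_neg hx, neg_mul_neg]
    rw [hψx]
    funext i
    fin_cases i <;>
      simp [σ1, σ3, hv, Matrix.mulVec, dotProduct, Fin.sum_univ_two,
        Complex.real_smul, hE, hsdef, hωdef, -Complex.ofReal_cos, -Complex.ofReal_sin,
        -Complex.ofReal_exp]
    next => ring
    next =>
      linear_combination (-(Real.exp (Real.sin (τ / 2) * x) : ℂ)) * hpyth
        + (((Real.sin (τ / 2) : ℂ)) ^ 2
          * ((Real.exp (Real.sin (τ / 2) * x) : ℝ) : ℂ)) * Complex.I_sq
  · intro x hx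
    rw [(hpos x hx).deriv]
    have hψx : ψ x = Real.exp (-s * x) • v := by
      simp [hψdef, abs_of_pos hx]
    rw [hψx]
    funext i
    fin_cases i <;>
      simp [σstar, σ3, hv, Matrix.mulVec, dotProduct, Fin.sum_univ_two,
        Complex.real_smul, hE, hE2', hENeg, hsdef, hωdef, -Complex.ofReal_cos, -Complex.ofReal_sin,
        -Complex.ofReal_exp]
    next =>
      linear_combination (-(Real.exp (-(Real.sin (τ / 2) * x)) : ℂ)
        * ((Real.cos (τ / 2) : ℂ) - (Real.sin (τ / 2) : ℂ) * Complex.I)) * hpyth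
        + ((((Real.sin (τ / 2) : ℂ)) ^ 2 * ((Real.cos (τ / 2) : ℂ))
          - Complex.I * ((Real.sin (τ / 2) : ℂ)) ^ 3)
          * ((Real.exp (-(Real.sin (τ / 2) * x)) : ℝ) : ℂ)) * Complex.I_sq
    next => ring
  · have hint : ∀ x : ℝ, ‖ψ x 0‖ ^ 2 + ‖ψ x 1‖ ^ 2
        = 2 * Real.exp (-(2 * s) * |x|) := by
      intro x
      have h0 : ψ x 0 = ((Real.exp (-s * |x|) : ℝ) : ℂ) := by
        simp [hψdef, hv, Complex.real_smul]
      have h1 : ψ x 1 = ((Real.exp (-s * |x|) : ℝ) : ℂ)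
          * (-Complex.exp (Complex.I * ((τ : ℂ) / 2))) := by
        simp [hψdef, hv, Complex.real_smul]
      rw [h0, h1]
      have h2 : Real.exp (-(s * |x|)) ^ 2 = Real.exp (-(2 * s * |x|)) := by
        rw [sq, ← Real.exp_add]; ring_nf
      simp [Complex.norm_exp, Real.abs_exp]
      rw [h2]; ring_nf
    simp only [hint]
    rw [integral_comp_abs (f := fun t => 2 * Real.exp (-(2 * s) * t))]
    have h2s : (0 : ℝ) < 2 * s := by positivity
    have hsub : ∫ x in Set.Ioi (0 : ℝ), 2 * Real.exp (-(2 * s) * x)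
        = (2 * s)⁻¹ * ∫ x in Set.Ioi (0 : ℝ), 2 * Real.exp (-x) := by
      have := MeasureTheory.integral_comp_mul_left_Ioi (fun t => 2 * Real.exp (-t)) 0 h2s
      simpa [mul_zero, neg_mul, smul_eq_mul] using this
    rw [hsub, MeasureTheory.integral_const_mul, integral_exp_neg_Ioi_zero, ← hsdef]
    field_simp
  · have hc2 : Real.cos (τ / 2) ^ 2 < 1 := by
      nlinarith [Real.sin_sq_add_cos_sq (τ / 2), hs, hsdef]
    refine ⟨?_, ?_, ?_⟩
    · show (-1 : ℝ) < (-((Real.cos (τ / 2) : ℝ) : ℂ)).re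
      simp only [Complex.neg_re, Complex.ofReal_re]
      nlinarith
    · show (-((Real.cos (τ / 2) : ℝ) : ℂ)).re < 1
      simp only [Complex.neg_re, Complex.ofReal_re]
      nlinarith
    · show (-((Real.cos (τ / 2) : ℝ) : ℂ)).im = 0
      simp only [Complex.neg_im, Complex.ofReal_im, neg_zero]
  · show (-((Real.cos (τ / 2) : ℝ) : ℂ)) ^ 2 = ((Real.cos (τ / 2) : ℝ) : ℂ) ^ 2
    ring
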